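/- The first ℓ∞-cohomology of a connected graph X with coefficients in a normed vector space V is isomorphic to the space of Lipschitz functions from the vertex set of X to V modulo bounded functions. -/

import Mathlib

open Finsupp

variable {V : Type*}

/-- 0-chains. -/
abbrev C0 (V : Type*) := V →₀ ℝ
/-- 1-chains: free real vector space on ordered pairs of vertices. -/
abbrev C1 (V : Type*) := (V × V) →₀ ℝ
/-- 2-chains: free real vector space on ordered triples of vertices. -/
abbrev C2 (V : Type*) := (V × V × V) →₀ ℝ
/-- 3-chains. -/
abbrev C3 (V : Type*) := (V × V × V × V) →₀ ℝ

/-- ℓ¹-norm of a finitely supported chain. -/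
noncomputable def l1 {α : Type*} (c : α →₀ ℝ) : ℝ := c.support.sum fun t => |c t|

/-- Boundary map ∂ : C₂ → C₁, (x₀,x₁,x₂) ↦ (x₁,x₂) − (x₀,x₂) + (x₀,x₁). -/
noncomputable def bdry2 : C2 V →ₗ[ℝ] C1 V :=
  Finsupp.lsum ℝ fun t => LinearMap.toSpanSingleton ℝ (C1 V)
    (single (t.2.1, t.2.2) 1 - single (t.1, t.2.2) 1 + single (t.1, t.2.1) 1)

/-- Boundary map ∂ : C₁ → C₀, (x₀,x₁) ↦ x₁ − x₀. -/
noncomputable def bdry1 : C1 V →ₗ[ℝ] C0 V :=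
  Finsupp.lsum ℝ fun t => LinearMap.toSpanSingleton ℝ (C0 V)
    (single t.2 1 - single t.1 1)

/-- Boundary map ∂ : C₃ → C₂. -/
noncomputable def bdry3 : C3 V →ₗ[ℝ] C2 V :=
  Finsupp.lsum ℝ fun t => LinearMap.toSpanSingleton ℝ (C2 V)
    (single (t.2.1, t.2.2.1, t.2.2.2) 1 - single (t.1, t.2.2.1, t.2.2.2) 1
      + single (t.1, t.2.1, t.2.2.2) 1 - single (t.1, t.2.1, t.2.2.1) 1)

/-- Two vertices are at (finite) distance at most R. -/
def pairOK (G : SimpleGraph V) (R : ℕ) (a b : V) : Prop :=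
  G.Reachable a b ∧ G.dist a b ≤ R

/-- Membership in C₁^R : supported on pairs at distance ≤ R. -/
def memC1R (G : SimpleGraph V) (R : ℕ) (c : C1 V) : Prop :=
  ∀ t ∈ c.support, pairOK G R t.1 t.2

/-- Membership in C₂^R : supported on triples of diameter ≤ R. -/
def memC2R (G : SimpleGraph V) (R : ℕ) (c : C2 V) : Prop :=
  ∀ t ∈ c.support, pairOK G R t.1 t.2.1 ∧ pairOK G R t.1 t.2.2 ∧ pairOK G R t.2.1 t.2.2

/-- Membership in B₁^R = ∂C₂^R. -/
def memB1R (G : SimpleGraph V) (R : ℕ) (b : C1 V) : Prop :=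
  ∃ a : C2 V, memC2R G R a ∧ bdry2 a = b

/-- The filling norm ‖b‖_F^R = inf of ℓ¹-norms of fillings in C₂^R. -/
noncomputable def fillNorm (G : SimpleGraph V) (R : ℕ) (b : C1 V) : ℝ :=
  sInf {r | ∃ a : C2 V, memC2R G R a ∧ bdry2 a = b ∧ r = l1 a}

/-- The 1-chain c(p) associated to a walk p. -/
noncomputable def walkChain (G : SimpleGraph V) {x y : V} (p : G.Walk x y) : C1 V :=
  (p.darts.map fun d => single d.toProd (1 : ℝ)).sum

/-- A walk is geodesic if its length realizes the distance of its endpoints. -/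
def IsGeodesicWalk (G : SimpleGraph V) {x y : V} (p : G.Walk x y) : Prop :=
  p.length = G.dist x y

/-- Geodesic triangles of G are n-slim. -/
def SlimTriangles (G : SimpleGraph V) (n : ℕ) : Prop :=
  ∀ (x y z : V) (p : G.Walk x y) (q : G.Walk y z) (r : G.Walk x z),
    IsGeodesicWalk G p → IsGeodesicWalk G q → IsGeodesicWalk G r →
    (∀ v ∈ p.support, ∃ w, (w ∈ q.support ∨ w ∈ r.support) ∧ G.dist v w ≤ n) ∧
    (∀ v ∈ q.support, ∃ w, (w ∈ p.support ∨ w ∈ r.support) ∧ G.dist v w ≤ n) ∧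
    (∀ v ∈ r.support, ∃ w, (w ∈ p.support ∨ w ∈ q.support) ∧ G.dist v w ≤ n)

/-- A real chain has integer coefficients. -/
def IntCoeffs {α : Type*} (c : α →₀ ℝ) : Prop := ∀ t, ∃ n : ℤ, c t = n

/-- X has a finite homological isoperimetric function with parameters R₀, θ :
for every closed path p, c(p) ∈ B₁^{R₀} and ‖c(p)‖_F^{R₀} ≤ θ(length p). -/
def FinHomIsop (G : SimpleGraph V) (R₀ : ℕ) (θ : ℕ → ℝ) : Prop :=
  ∀ (x : V) (p : G.Walk x x), memB1R G R₀ (walkChain G p) ∧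
    fillNorm G R₀ (walkChain G p) ≤ θ p.length

/-- A 2-cochain is bounded on each C₂^R. -/
def Bdd2 {W : Type*} [NormedAddCommGroup W] [NormedSpace ℝ W]
    (G : SimpleGraph V) (f : C2 V →ₗ[ℝ] W) : Prop :=
  ∀ R : ℕ, ∃ M : ℝ, ∀ c : C2 V, memC2R G R c → ‖f c‖ ≤ M * l1 c

/-- A 1-cochain is bounded on each C₁^R. -/
def Bdd1 {W : Type*} [NormedAddCommGroup W] [NormedSpace ℝ W]
    (G : SimpleGraph V) (f : C1 V →ₗ[ℝ] W) : Prop :=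
  ∀ R : ℕ, ∃ M : ℝ, ∀ c : C1 V, memC1R G R c → ‖f c‖ ≤ M * l1 c

/-- A Banach space is 1-injective: bounded linear maps into it extend from
subspaces of normed spaces with the same norm. -/
def IsOneInjective (W : Type*) [NormedAddCommGroup W] [NormedSpace ℝ W] : Prop :=
  ∀ (E : Type) [NormedAddCommGroup E] [NormedSpace ℝ E],
    ∀ (p : Subspace ℝ E) (φ : p →L[ℝ] W),
      ∃ ψ : E →L[ℝ] W, (∀ x : p, ψ x = φ x) ∧ ‖ψ‖ ≤ ‖φ‖

variable (W : Type*) [NormedAddCommGroup W] [NormedSpace ℝ W]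

lemma l1_nonneg {α : Type*} (c : α →₀ ℝ) : 0 ≤ l1 c :=
  Finset.sum_nonneg fun _ _ => abs_nonneg _

/-- The ℓ∞ 1-cocycles: linear maps C₁ → W bounded on each C₁^R and vanishing
on boundaries of 2-chains. -/
noncomputable def Zone (G : SimpleGraph V) : Submodule ℝ (C1 V →ₗ[ℝ] W) where
  carrier := {f | (∀ R : ℕ, ∃ M : ℝ, ∀ c : C1 V, memC1R G R c → ‖f c‖ ≤ M * l1 c) ∧
    ∀ a : C2 V, f (bdry2 a) = 0}
  zero_mem' := by
    refine ⟨fun R => ⟨0, fun c _ => by simp⟩, fun a => rfl⟩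
  add_mem' := by
    rintro f g ⟨hf, hf0⟩ ⟨hg, hg0⟩
    refine ⟨fun R => ?_, fun a => by simp [hf0 a, hg0 a]⟩
    obtain ⟨M, hM⟩ := hf R
    obtain ⟨N, hN⟩ := hg R
    refine ⟨M + N, fun c hc => ?_⟩
    calc ‖(f + g) c‖ = ‖f c + g c‖ := by simp
      _ ≤ ‖f c‖ + ‖g c‖ := norm_add_le _ _
      _ ≤ M * l1 c + N * l1 c := add_le_add (hM c hc) (hN c hc)
      _ = (M + N) * l1 c := by ring
  smul_mem' := by
    rintro r f ⟨hf, hf0⟩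
    refine ⟨fun R => ?_, fun a => by simp [hf0 a]⟩
    obtain ⟨M, hM⟩ := hf R
    refine ⟨|r| * M, fun c hc => ?_⟩
    calc ‖(r • f) c‖ = |r| * ‖f c‖ := by
          simp [norm_smul, Real.norm_eq_abs]
      _ ≤ |r| * (M * l1 c) := mul_le_mul_of_nonneg_left (hM c hc) (abs_nonneg r)
      _ = |r| * M * l1 c := by ring
/-- The ℓ∞ 1-coboundaries: coboundaries of bounded 0-cochains. -/
noncomputable def Bone (G : SimpleGraph V) : Submodule ℝ (C1 V →ₗ[ℝ] W) where
  carrier := {f | ∃ g : C0 V →ₗ[ℝ] W,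
    (∃ M : ℝ, ∀ c : C0 V, ‖g c‖ ≤ M * l1 c) ∧ f = g.comp bdry1}
  zero_mem' := ⟨0, ⟨0, fun c => by simp⟩, by simp⟩
  add_mem' := by
    rintro f g ⟨gf, ⟨M, hM⟩, rfl⟩ ⟨gg, ⟨N, hN⟩, rfl⟩
    refine ⟨gf + gg, ⟨M + N, fun c => ?_⟩, by rw [LinearMap.add_comp]⟩
    calc ‖(gf + gg) c‖ = ‖gf c + gg c‖ := by simp
      _ ≤ ‖gf c‖ + ‖gg c‖ := norm_add_le _ _
      _ ≤ M * l1 c + N * l1 c := add_le_add (hM c) (hN c)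
      _ = (M + N) * l1 c := by ring
  smul_mem' := by
    rintro r f ⟨gf, ⟨M, hM⟩, rfl⟩
    refine ⟨r • gf, ⟨|r| * M, fun c => ?_⟩, by rw [LinearMap.smul_comp]⟩
    calc ‖(r • gf) c‖ = |r| * ‖gf c‖ := by simp [norm_smul, Real.norm_eq_abs]
      _ ≤ |r| * (M * l1 c) := mul_le_mul_of_nonneg_left (hM c) (abs_nonneg r)
      _ = |r| * M * l1 c := by ring

/-- Lipschitz functions from the vertex set to W (w.r.t. the graph metric). -/
def LipFuns (G : SimpleGraph V) : Submodule ℝ (V → W) where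
  carrier := {f | ∃ L : ℝ, ∀ x y : V, ‖f x - f y‖ ≤ L * (G.dist x y : ℝ)}
  zero_mem' := ⟨0, fun x y => by simp⟩
  add_mem' := by
    rintro f g ⟨L, hL⟩ ⟨K, hK⟩
    refine ⟨L + K, fun x y => ?_⟩
    calc ‖(f + g) x - (f + g) y‖ = ‖(f x - f y) + (g x - g y)‖ := by
          simp only [Pi.add_apply]
          congr 1
          abel
      _ ≤ ‖f x - f y‖ + ‖g x - g y‖ := norm_add_le _ _
      _ ≤ L * (G.dist x y : ℝ) + K * (G.dist x y : ℝ) := add_le_add (hL x y) (hK x y)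
      _ = (L + K) * (G.dist x y : ℝ) := by ring
  smul_mem' := by
    rintro r f ⟨L, hL⟩
    refine ⟨|r| * L, fun x y => ?_⟩
    calc ‖(r • f) x - (r • f) y‖ = |r| * ‖f x - f y‖ := by
          simp only [Pi.smul_apply, ← smul_sub, norm_smul, Real.norm_eq_abs]
      _ ≤ |r| * (L * (G.dist x y : ℝ)) :=
          mul_le_mul_of_nonneg_left (hL x y) (abs_nonneg r)
      _ = |r| * L * (G.dist x y : ℝ) := by ring

/-- Bounded functions from the vertex set to W. -/
def BddFuns : Submodule ℝ (V → W) where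
  carrier := {f | ∃ M : ℝ, ∀ x : V, ‖f x‖ ≤ M}
  zero_mem' := ⟨0, fun x => by simp⟩
  add_mem' := by
    rintro f g ⟨M, hM⟩ ⟨N, hN⟩
    exact ⟨M + N, fun x => (norm_add_le _ _).trans (add_le_add (hM x) (hN x))⟩
  smul_mem' := by
    rintro r f ⟨M, hM⟩
    refine ⟨|r| * M, fun x => ?_⟩
    calc ‖(r • f) x‖ = |r| * ‖f x‖ := by simp [norm_smul, Real.norm_eq_abs]
      _ ≤ |r| * M := mul_le_mul_of_nonneg_left (hM x) (abs_nonneg r)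

section Aux

variable {W : Type*} [NormedAddCommGroup W] [NormedSpace ℝ W]

/-- The cochain associated to a 0-level function. -/
noncomputable def Tmap (g : V → W) : C1 V →ₗ[ℝ] W :=
  Finsupp.lsum ℝ fun t => LinearMap.toSpanSingleton ℝ W (g t.2 - g t.1)

lemma Tmap_single (g : V → W) (t : V × V) (r : ℝ) :
    Tmap g (single t r) = r • (g t.2 - g t.1) := by
  simp [Tmap]

lemma Tmap_add (g h : V → W) : Tmap (g + h) = Tmap g + Tmap h := by
  apply Finsupp.lhom_ext
  intro a b
  simp [Tmap_single, smul_add, smul_sub]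
  abel

lemma Tmap_smul (r : ℝ) (g : V → W) : Tmap (r • g) = r • Tmap g := by
  apply Finsupp.lhom_ext
  intro a b
  simp [Tmap_single, smul_sub, smul_comm r b]

lemma l1_single {α : Type*} (a : α) : l1 (single a (1:ℝ)) = 1 := by
  classical
  simp [l1, Finsupp.support_single_ne_zero a one_ne_zero]

lemma lsum_norm_le (v : V × V → W) (c : C1 V) (K : ℝ)
    (h : ∀ t ∈ c.support, ‖v t‖ ≤ K) :
    ‖(Finsupp.lsum ℝ fun t => LinearMap.toSpanSingleton ℝ W (v t)) c‖ ≤ K * l1 c := by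
  rw [Finsupp.lsum_apply]
  calc ‖c.sum fun t r => (LinearMap.toSpanSingleton ℝ W (v t)) r‖
      ≤ c.support.sum fun t => ‖(c t) • v t‖ := by
        refine norm_sum_le_of_le _ fun t ht => ?_
        simp [LinearMap.toSpanSingleton_apply]
    _ ≤ c.support.sum fun t => |c t| * K := by
        refine Finset.sum_le_sum fun t ht => ?_
        rw [norm_smul, Real.norm_eq_abs]
        exact mul_le_mul_of_nonneg_left (h t ht) (abs_nonneg _)
    _ = K * l1 c := by rw [l1, ← Finset.sum_mul, mul_comm]

lemma lsum0_norm_le (v : V → W) (c : C0 V) (K : ℝ)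
    (h : ∀ t ∈ c.support, ‖v t‖ ≤ K) :
    ‖(Finsupp.lsum ℝ fun t => LinearMap.toSpanSingleton ℝ W (v t)) c‖ ≤ K * l1 c := by
  rw [Finsupp.lsum_apply]
  calc ‖c.sum fun t r => (LinearMap.toSpanSingleton ℝ W (v t)) r‖
      ≤ c.support.sum fun t => ‖(c t) • v t‖ := by
        refine norm_sum_le_of_le _ fun t ht => ?_
        simp [LinearMap.toSpanSingleton_apply]
    _ ≤ c.support.sum fun t => |c t| * K := by
        refine Finset.sum_le_sum fun t ht => ?_
        rw [norm_smul, Real.norm_eq_abs]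
        exact mul_le_mul_of_nonneg_left (h t ht) (abs_nonneg _)
    _ = K * l1 c := by rw [l1, ← Finset.sum_mul, mul_comm]

lemma Tmap_bdry2 (g : V → W) (a : C2 V) : Tmap g (bdry2 a) = 0 := by
  have h : (Tmap g).comp bdry2 = 0 := by
    apply Finsupp.lhom_ext
    intro t r
    simp only [LinearMap.comp_apply, bdry2, Finsupp.lsum_single,
      LinearMap.toSpanSingleton_apply, LinearMap.zero_apply, map_smul, map_add, map_sub,
      Tmap_single, one_smul]
    rw [show (g t.2.2 - g t.2.1) - (g t.2.2 - g t.1) + (g t.2.1 - g t.1) = 0 by abel,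
      smul_zero]
  calc Tmap g (bdry2 a) = ((Tmap g).comp bdry2) a := rfl
    _ = 0 := by rw [h]; rfl

lemma Tmap_mem_Zone (G : SimpleGraph V) (g : V → W)
    (hg : ∃ L : ℝ, ∀ x y : V, ‖g x - g y‖ ≤ L * (G.dist x y : ℝ)) :
    Tmap g ∈ Zone W G := by
  obtain ⟨L, hL⟩ := hg
  constructor
  · intro R
    refine ⟨max L 0 * R, fun c hc => ?_⟩
    refine lsum_norm_le _ c _ fun t ht => ?_
    obtain ⟨hre, hd⟩ := hc t ht
    calc ‖g t.2 - g t.1‖ ≤ L * (G.dist t.2 t.1 : ℝ) := hL t.2 t.1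
      _ ≤ max L 0 * (G.dist t.2 t.1 : ℝ) :=
        mul_le_mul_of_nonneg_right (le_max_left _ _) (by positivity)
      _ ≤ max L 0 * R := by
        refine mul_le_mul_of_nonneg_left ?_ (le_max_right _ _)
        exact_mod_cast (SimpleGraph.dist_comm ▸ hd : G.dist t.2 t.1 ≤ R)
  · exact Tmap_bdry2 g

lemma zone_diff (f : C1 V →ₗ[ℝ] W) (hf : ∀ a : C2 V, f (bdry2 a) = 0) (x₀ x y : V) :
    f (single (x, y) 1) = f (single (x₀, y) 1) - f (single (x₀, x) 1) := by
  have h := hf (single (x₀, x, y) (1 : ℝ))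
  simp only [bdry2, Finsupp.lsum_single, LinearMap.toSpanSingleton_apply, one_smul,
    map_add, map_sub] at h
  have h2 : f (single (x, y) 1) - (f (single (x₀, y) 1) - f (single (x₀, x) 1)) =
      f (single (x, y) 1) - f (single (x₀, y) 1) + f (single (x₀, x) 1) := by abel
  exact sub_eq_zero.mp (h2.trans h)

end Aux

section Aux2

variable {W : Type*} [NormedAddCommGroup W] [NormedSpace ℝ W]

lemma memC1R_single_adj (G : SimpleGraph V) {x y : V} (h : G.Adj x y) :
    memC1R G 1 (single (x, y) (1 : ℝ)) := by
  classical
  intro t ht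
  rw [Finsupp.support_single_ne_zero _ one_ne_zero, Finset.mem_singleton] at ht
  subst ht
  exact ⟨h.reachable, SimpleGraph.dist_le (SimpleGraph.Walk.cons h SimpleGraph.Walk.nil)⟩

lemma exists_lip (G : SimpleGraph V) (hconn : G.Connected) (f : C1 V →ₗ[ℝ] W)
    (M : ℝ) (hfb : ∀ c : C1 V, memC1R G 1 c → ‖f c‖ ≤ M * l1 c)
    (hf0 : ∀ a : C2 V, f (bdry2 a) = 0) :
    ∃ g : V → W, (∃ L : ℝ, ∀ x y : V, ‖g x - g y‖ ≤ L * (G.dist x y : ℝ)) ∧ Tmap g = f := by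
  classical
  obtain ⟨x₀⟩ := hconn.nonempty
  set g : V → W := fun x => f (single (x₀, x) 1) with hg
  have key : ∀ x y : V, g y - g x = f (single (x, y) 1) := by
    intro x y
    rw [zone_diff f hf0 x₀ x y]
  have adjbd : ∀ x y : V, G.Adj x y → ‖g y - g x‖ ≤ max M 0 := by
    intro x y h
    rw [key]
    calc ‖f (single (x, y) 1)‖ ≤ M * l1 (single (x, y) (1:ℝ)) :=
          hfb _ (memC1R_single_adj G h)
      _ = M := by rw [l1_single, mul_one]
      _ ≤ max M 0 := le_max_left _ _
  have walkbd : ∀ (x y : V) (p : G.Walk x y), ‖g y - g x‖ ≤ max M 0 * p.length := by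
    intro x y p
    induction p with
    | nil => simp
    | @cons a b c h q ih =>
      calc ‖g c - g a‖ ≤ ‖g c - g b‖ + ‖g b - g a‖ := norm_sub_le_norm_sub_add_norm_sub _ _ _
        _ ≤ max M 0 * q.length + max M 0 := add_le_add ih (adjbd a b h)
        _ = max M 0 * ((SimpleGraph.Walk.cons h q).length : ℝ) := by
            rw [SimpleGraph.Walk.length_cons]
            push_cast
            ring
  refine ⟨g, ⟨max M 0, fun x y => ?_⟩, ?_⟩
  · obtain ⟨p, hp⟩ := (hconn y x).exists_walk_length_eq_dist
    have := walkbd y x p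
    rw [hp] at this
    rwa [SimpleGraph.dist_comm] at this
  · apply Finsupp.lhom_ext
    intro t r
    rw [Tmap_single, key t.1 t.2, ← map_smul, Finsupp.smul_single, smul_eq_mul, mul_one]

lemma Tmap_mem_Bone_iff (G : SimpleGraph V) (hconn : G.Connected) (g : V → W) :
    Tmap g ∈ Bone W G ↔ ∃ M : ℝ, ∀ x : V, ‖g x‖ ≤ M := by
  classical
  constructor
  · rintro ⟨h, ⟨M, hM⟩, heq⟩
    obtain ⟨x₀⟩ := hconn.nonempty
    refine ⟨‖g x₀ - h (single x₀ 1)‖ + M, fun x => ?_⟩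
    have e1 : Tmap g (single (x₀, x) 1) = g x - g x₀ := by
      rw [Tmap_single, one_smul]
    have e2 : Tmap g (single (x₀, x) 1) = h (single x 1) - h (single x₀ 1) := by
      rw [heq]
      simp only [LinearMap.comp_apply, bdry1, Finsupp.lsum_single,
        LinearMap.toSpanSingleton_apply, one_smul, map_sub]
    have e3 : g x = (g x₀ - h (single x₀ 1)) + h (single x 1) := by
      have := e1.symm.trans e2
      rw [sub_eq_iff_eq_add] at this
      rw [this]
      abel
    rw [e3]
    refine (norm_add_le _ _).trans (add_le_add le_rfl ?_)
    calc ‖h (single x 1)‖ ≤ M * l1 (single x (1:ℝ)) := hM _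
      _ = M := by rw [l1_single, mul_one]
  · rintro ⟨M, hM⟩
    refine ⟨Finsupp.lsum ℝ fun v => LinearMap.toSpanSingleton ℝ W (g v),
      ⟨max M 0, fun c => lsum0_norm_le g c _ fun t _ => (hM t).trans (le_max_left _ _)⟩, ?_⟩
    apply Finsupp.lhom_ext
    intro t r
    simp only [LinearMap.comp_apply, bdry1, Finsupp.lsum_single,
      LinearMap.toSpanSingleton_apply, Tmap_single, map_smul, map_sub, smul_sub, one_smul]

end Aux2

/-- H¹_{(∞)}(X;W) of a connected graph X is isomorphic to
Lipschitz functions modulo bounded functions. -/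
theorem H1_iso_lip_mod_bounded (G : SimpleGraph V) (hconn : G.Connected) :
    Nonempty
      ((Zone W G ⧸ (Bone W G).comap (Zone W G).subtype) ≃ₗ[ℝ]
        (LipFuns W G ⧸ (BddFuns (V := V) W).comap (LipFuns W G).subtype)) := by
  classical
  set N : Submodule ℝ (Zone W G) := (Bone W G).comap (Zone W G).subtype with hN
  let Φ : LipFuns W G →ₗ[ℝ] Zone W G :=
    { toFun := fun g => ⟨Tmap (g : V → W), Tmap_mem_Zone G _ g.2⟩
      map_add' := fun a b => Subtype.ext (by
        simp only [Submodule.coe_add]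
        exact Tmap_add _ _)
      map_smul' := fun r a => Subtype.ext (by
        simp only [SetLike.val_smul, RingHom.id_apply]
        exact Tmap_smul _ _) }
  let Φq : LipFuns W G →ₗ[ℝ] (Zone W G ⧸ N) := N.mkQ.comp Φ
  have hsurj : Function.Surjective Φq := by
    intro z
    obtain ⟨f, rfl⟩ := N.mkQ_surjective z
    obtain ⟨hb, h0⟩ := f.2
    obtain ⟨M, hM⟩ := hb 1
    obtain ⟨g, hgl, hgT⟩ := exists_lip G hconn f.1 M hM h0
    refine ⟨⟨g, hgl⟩, ?_⟩
    have : Φ ⟨g, hgl⟩ = f := Subtype.ext hgT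
    simp only [Φq, LinearMap.comp_apply, this]
  have hker : LinearMap.ker Φq = (BddFuns (V := V) W).comap (LipFuns W G).subtype := by
    ext g
    have : Φq g = 0 ↔ Φ g ∈ N :=
      (Submodule.Quotient.mk_eq_zero N)
    simp only [LinearMap.mem_ker, Φq, LinearMap.comp_apply, Submodule.mkQ_apply]
    rw [Submodule.Quotient.mk_eq_zero N]
    change Tmap (g : V → W) ∈ Bone W G ↔ _
    rw [Tmap_mem_Bone_iff G hconn]
    rfl
  exact ⟨((Submodule.quotEquivOfEq _ _ hker.symm).trans
    (Φq.quotKerEquivOfSurjective hsurj)).symm⟩
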